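/- Let R be a finite Frobenius ring with generating character χ, and let 𝒰 be a subgroup of GL(n,R). Let 𝒫_𝒰 denote the partition of R^n into orbits of the right action x ↦ xU (U ∈ 𝒰, x a row vector), and let 𝒫_{𝒰^T} denote the partition of R^n into orbits of the left action x ↦ (U x^T)^T. Then 𝒫_{𝒰^T} is the left χ-dual partition of 𝒫_𝒰; explicitly, for all v,v' ∈ R^n: (∃ U ∈ 𝒰 with v' = (U v^T)^T) if and only if for every orbit P of the right action, ∑_{w∈P} χ(⟨w,v⟩) = ∑_{w∈P} χ(⟨w,v'⟩). Likewise, 𝒫_𝒰 is the right χ-dual partition of 𝒫_{𝒰^T}: for all v,v' ∈ R^n, (∃ U ∈ 𝒰 with v' = vU) if and only if for every orbit Q of the left action, ∑_{w∈Q} χ(⟨v,w⟩) = ∑_{w∈Q} χ(⟨v',w⟩). -/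

import Mathlib

open Matrix
open scoped Classical

noncomputable section

/-- `χ` is a generating character of the finite ring `R`. -/
def IsGeneratingChar {R : Type*} [Ring R] [Fintype R] (χ : AddChar R ℂ) : Prop :=
  ∀ ψ : AddChar R ℂ, ∃! r : R, ∀ x : R, ψ x = χ (x * r)

variable {R : Type*} [Ring R] [Fintype R] {n : ℕ}

/-- The sum `∑_{w ∈ S} χ ⟨w, v⟩`. -/
def sumL (χ : AddChar R ℂ) (S : Set (Fin n → R)) (v : Fin n → R) : ℂ :=
  ∑ w ∈ S.toFinite.toFinset, χ (w ⬝ᵥ v)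

/-- The sum `∑_{w ∈ S} χ ⟨v, w⟩`. -/
def sumR (χ : AddChar R ℂ) (S : Set (Fin n → R)) (v : Fin n → R) : ℂ :=
  ∑ w ∈ S.toFinite.toFinset, χ (v ⬝ᵥ w)

/-- The orbit of `v` under the right action `x ↦ xU` of the subgroup `𝒰` of `GL(n,R)`. -/
def rightOrbit (𝒰 : Subgroup (Matrix (Fin n) (Fin n) R)ˣ) (v : Fin n → R) :
    Set (Fin n → R) :=
  {w | ∃ U ∈ 𝒰, w = v ᵥ* U.val}

/-- The orbit of `v` under the left action `x ↦ (U xᵀ)ᵀ` of the subgroup `𝒰` of `GL(n,R)`. -/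
def leftOrbit (𝒰 : Subgroup (Matrix (Fin n) (Fin n) R)ˣ) (v : Fin n → R) :
    Set (Fin n → R) :=
  {w | ∃ U ∈ 𝒰, w = U.val *ᵥ v}

/-! ### Auxiliary lemmas -/

lemma gen_right_ker (χ : AddChar R ℂ) (hχ : IsGeneratingChar χ) {a : R}
    (h : ∀ t : R, χ (t * a) = 1) : a = 0 := by
  obtain ⟨r, _, hu⟩ := hχ 1
  have h1 : a = r := hu a (fun x => by simpa using (h x).symm)
  have h2 : (0 : R) = r := hu 0 (fun x => by simp)
  rw [h1, ← h2]

lemma gen_left_ker (χ : AddChar R ℂ) (hχ : IsGeneratingChar χ) {a : R}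
    (h : ∀ t : R, χ (a * t) = 1) : a = 0 := by
  by_contra ha
  obtain ⟨ψ, hψ⟩ := AddChar.exists_apply_ne_zero.mpr ha
  obtain ⟨r, hr, -⟩ := hχ ψ
  exact hψ (by rw [hr]; exact h r)

/-- Full-space character sum, variable in the left slot of the dot product. -/
lemma sum_char_dotL (χ : AddChar R ℂ) (hχ : IsGeneratingChar χ) (x : Fin n → R) :
    ∑ u : Fin n → R, χ (u ⬝ᵥ x) = if x = 0 then ((Fintype.card R : ℂ) ^ n) else 0 := by
  split_ifs with hx
  · subst hx
    simp [Finset.card_univ]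
  · set ψ : AddChar (Fin n → R) ℂ :=
      { toFun := fun u => χ (u ⬝ᵥ x)
        map_zero_eq_one' := by simp
        map_add_eq_mul' := fun u u' => by
          simp [add_dotProduct, AddChar.map_add_eq_mul] } with hψdef
    have hne : ψ ≠ 1 := by
      rw [AddChar.ne_one_iff]
      obtain ⟨i, hi⟩ := Function.ne_iff.mp hx
      by_contra hall
      push_neg at hall
      refine hi ?_
      have : x i = 0 := gen_right_ker χ hχ (fun t => by
        simpa [hψdef] using hall (Pi.single i t))
      simpa using this
    have := AddChar.sum_eq_zero_of_ne_one hne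
    simpa [hψdef] using this

/-- Full-space character sum, variable in the right slot of the dot product. -/
lemma sum_char_dotR (χ : AddChar R ℂ) (hχ : IsGeneratingChar χ) (x : Fin n → R) :
    ∑ u : Fin n → R, χ (x ⬝ᵥ u) = if x = 0 then ((Fintype.card R : ℂ) ^ n) else 0 := by
  split_ifs with hx
  · subst hx
    simp [Finset.card_univ]
  · set ψ : AddChar (Fin n → R) ℂ :=
      { toFun := fun u => χ (x ⬝ᵥ u)
        map_zero_eq_one' := by simp
        map_add_eq_mul' := fun u u' => by
          simp [dotProduct_add, AddChar.map_add_eq_mul] } with hψdef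
    have hne : ψ ≠ 1 := by
      rw [AddChar.ne_one_iff]
      obtain ⟨i, hi⟩ := Function.ne_iff.mp hx
      by_contra hall
      push_neg at hall
      refine hi ?_
      have : x i = 0 := gen_left_ker χ hχ (fun t => by
        simpa [hψdef] using hall (Pi.single i t))
      simpa using this
    have := AddChar.sum_eq_zero_of_ne_one hne
    simpa [hψdef] using this

/-- Summing a function over a finite group acting (on the right) on a type equals the size of
the stabilizer of `u` times the sum over the orbit of `u`. -/
lemma sum_group_orbit {G X : Type*} [Group G] [Fintype G] [DecidableEq X]
    (act : X → G → X) (hact : ∀ x g h, act x (g * h) = act (act x g) h)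
    (hone : ∀ x, act x 1 = x) (u : X) (f : X → ℂ) (T : Finset X)
    (hT : ∀ w, w ∈ T ↔ ∃ g : G, act u g = w) :
    ∑ g : G, f (act u g)
      = ((Finset.univ.filter fun g : G => act u g = u).card : ℂ) * ∑ w ∈ T, f w := by
  have hTimg : T = Finset.univ.image (act u) := by
    ext w
    simp only [hT, Finset.mem_image, Finset.mem_univ, true_and]
  subst hTimg
  rw [Finset.sum_comp f (act u), Finset.mul_sum]
  refine Finset.sum_congr rfl fun w hw => ?_
  obtain ⟨g₀, -, rfl⟩ := Finset.mem_image.mp hw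
  have hc : (Finset.univ.filter fun g : G => act u g = act u g₀).card
      = (Finset.univ.filter fun g : G => act u g = u).card := by
    refine Finset.card_nbij' (fun g => g * g₀⁻¹) (fun g => g * g₀) ?_ ?_ ?_ ?_
    · intro g hg
      simp only [Finset.mem_coe, Finset.mem_filter, Finset.mem_univ, true_and] at hg ⊢
      rw [hact, hg, ← hact, mul_inv_cancel, hone]
    · intro g hg
      simp only [Finset.mem_coe, Finset.mem_filter, Finset.mem_univ, true_and] at hg ⊢
      rw [hact, hg]
    · intro g _
      group
    · intro g _
      group
  rw [hc, nsmul_eq_mul]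

section OrbitLemmas

variable (𝒰 : Subgroup (Matrix (Fin n) (Fin n) R)ˣ)

lemma coe_mul' (U V : 𝒰) : (U * V).val.val = U.val.val * V.val.val := rfl

/-- Group sum vs. right-orbit sum. -/
lemma sum_group_rightOrbit (χ : AddChar R ℂ) (u a : Fin n → R) :
    ∑ U : 𝒰, χ ((u ᵥ* U.val.val) ⬝ᵥ a)
      = ((Finset.univ.filter fun U : 𝒰 => u ᵥ* U.val.val = u).card : ℂ)
        * sumL χ (rightOrbit 𝒰 u) a := by
  unfold sumL
  refine sum_group_orbit (fun x (U : 𝒰) => x ᵥ* U.val.val) ?_ ?_ u (fun w => χ (w ⬝ᵥ a)) _ ?_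
  · intro x g h
    show x ᵥ* (g * h).val.val = (x ᵥ* g.val.val) ᵥ* h.val.val
    rw [coe_mul', ← Matrix.vecMul_vecMul]
  · intro x
    show x ᵥ* (1 : 𝒰).val.val = x
    rw [OneMemClass.coe_one, Units.val_one, Matrix.vecMul_one]
  · intro w
    rw [Set.Finite.mem_toFinset]
    constructor
    · rintro ⟨V, hV, rfl⟩
      exact ⟨⟨V, hV⟩, rfl⟩
    · rintro ⟨g, rfl⟩
      exact ⟨g.val, g.2, rfl⟩

/-- Group sum vs. left-orbit sum. -/
lemma sum_group_leftOrbit (χ : AddChar R ℂ) (u a : Fin n → R) :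
    ∑ U : 𝒰, χ (a ⬝ᵥ ((U⁻¹).val.val *ᵥ u))
      = ((Finset.univ.filter fun U : 𝒰 => (U⁻¹).val.val *ᵥ u = u).card : ℂ)
        * sumR χ (leftOrbit 𝒰 u) a := by
  unfold sumR
  refine sum_group_orbit (fun x (U : 𝒰) => (U⁻¹).val.val *ᵥ x) ?_ ?_ u (fun w => χ (a ⬝ᵥ w)) _ ?_
  · intro x g h
    show ((g * h)⁻¹).val.val *ᵥ x = (h⁻¹).val.val *ᵥ ((g⁻¹).val.val *ᵥ x)
    rw [Matrix.mulVec_mulVec, _root_.mul_inv_rev, coe_mul']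
  · intro x
    show ((1 : 𝒰)⁻¹).val.val *ᵥ x = x
    rw [inv_one, OneMemClass.coe_one, Units.val_one, Matrix.one_mulVec]
  · intro w
    rw [Set.Finite.mem_toFinset]
    constructor
    · rintro ⟨V, hV, rfl⟩
      refine ⟨(⟨V, hV⟩ : 𝒰)⁻¹, ?_⟩
      show ((⟨V, hV⟩ : 𝒰)⁻¹⁻¹).val.val *ᵥ u = V.val *ᵥ u
      rw [inv_inv]
    · rintro ⟨g, rfl⟩
      exact ⟨(g⁻¹).val, (g⁻¹).2, rfl⟩

end OrbitLemmas

theorem orbitPartition_duality (χ : AddChar R ℂ) (hχ : IsGeneratingChar χ)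
    (𝒰 : Subgroup (Matrix (Fin n) (Fin n) R)ˣ) :
    (∀ v v' : Fin n → R,
      (∃ U ∈ 𝒰, v' = U.val *ᵥ v) ↔
      (∀ u : Fin n → R, sumL χ (rightOrbit 𝒰 u) v = sumL χ (rightOrbit 𝒰 u) v')) ∧
    (∀ v v' : Fin n → R,
      (∃ U ∈ 𝒰, v' = v ᵥ* U.val) ↔
      (∀ u : Fin n → R, sumR χ (leftOrbit 𝒰 u) v = sumR χ (leftOrbit 𝒰 u) v')) := by
  have hcard : ((Fintype.card R : ℂ) ^ n) ≠ 0 := by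
    refine pow_ne_zero _ ?_
    exact_mod_cast Fintype.card_ne_zero
  constructor
  · intro v v'
    constructor
    · -- forward
      rintro ⟨W, hW, rfl⟩ u
      unfold sumL
      refine Finset.sum_nbij' (fun w => w ᵥ* (W⁻¹).val) (fun w => w ᵥ* W.val) ?_ ?_ ?_ ?_ ?_
      · intro w hw
        rw [Set.Finite.mem_toFinset] at hw ⊢
        obtain ⟨V, hV, rfl⟩ := hw
        refine ⟨V * W⁻¹, mul_mem hV (inv_mem hW), ?_⟩
        show u ᵥ* V.val ᵥ* (W⁻¹).val = u ᵥ* (V * W⁻¹).val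
        rw [Units.val_mul, Matrix.vecMul_vecMul]
      · intro w hw
        rw [Set.Finite.mem_toFinset] at hw ⊢
        obtain ⟨V, hV, rfl⟩ := hw
        refine ⟨V * W, mul_mem hV hW, ?_⟩
        show u ᵥ* V.val ᵥ* W.val = u ᵥ* (V * W).val
        rw [Units.val_mul, Matrix.vecMul_vecMul]
      · intro w _
        show w ᵥ* (W⁻¹).val ᵥ* W.val = w
        rw [Matrix.vecMul_vecMul, ← Units.val_mul, inv_mul_cancel, Units.val_one,
          Matrix.vecMul_one]
      · intro w _
        show w ᵥ* W.val ᵥ* (W⁻¹).val = w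
        rw [Matrix.vecMul_vecMul, ← Units.val_mul, mul_inv_cancel, Units.val_one,
          Matrix.vecMul_one]
      · intro w _
        show χ (w ⬝ᵥ v) = χ ((w ᵥ* (W⁻¹).val) ⬝ᵥ (W.val *ᵥ v))
        rw [Matrix.dotProduct_mulVec, Matrix.vecMul_vecMul, ← Units.val_mul, inv_mul_cancel,
          Units.val_one, Matrix.vecMul_one]
    · -- converse
      intro H
      have key : ∀ a : Fin n → R,
          (∑ U : 𝒰, ∑ u : Fin n → R, χ (u ⬝ᵥ (U.val.val *ᵥ a - v')))
            = ∑ u : Fin n → R, χ (u ⬝ᵥ (-v'))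
                * (((Finset.univ.filter fun U : 𝒰 => u ᵥ* U.val.val = u).card : ℂ)
                    * sumL χ (rightOrbit 𝒰 u) a) := by
        intro a
        rw [Finset.sum_comm]
        refine Finset.sum_congr rfl fun u _ => ?_
        calc ∑ U : 𝒰, χ (u ⬝ᵥ (U.val.val *ᵥ a - v'))
            = ∑ U : 𝒰, χ (u ⬝ᵥ (-v')) * χ ((u ᵥ* U.val.val) ⬝ᵥ a) := by
              refine Finset.sum_congr rfl fun U _ => ?_
              rw [sub_eq_add_neg, dotProduct_add, AddChar.map_add_eq_mul, mul_comm,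
                Matrix.dotProduct_mulVec]
          _ = χ (u ⬝ᵥ (-v')) * ∑ U : 𝒰, χ ((u ᵥ* U.val.val) ⬝ᵥ a) := by
              rw [Finset.mul_sum]
          _ = _ := by rw [sum_group_rightOrbit 𝒰 χ u a]
      have hΦ : (∑ U : 𝒰, ∑ u : Fin n → R, χ (u ⬝ᵥ (U.val.val *ᵥ v - v')))
          = ∑ U : 𝒰, ∑ u : Fin n → R, χ (u ⬝ᵥ (U.val.val *ᵥ v' - v')) := by
        rw [key v, key v']
        exact Finset.sum_congr rfl fun u _ => by rw [H u]
      have eval : ∀ a : Fin n → R,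
          (∑ U : 𝒰, ∑ u : Fin n → R, χ (u ⬝ᵥ (U.val.val *ᵥ a - v')))
            = ((Fintype.card R : ℂ) ^ n)
              * ((Finset.univ.filter fun U : 𝒰 => U.val.val *ᵥ a = v').card : ℂ) := by
        intro a
        have step : ∀ U : 𝒰, (∑ u : Fin n → R, χ (u ⬝ᵥ (U.val.val *ᵥ a - v')))
            = if U.val.val *ᵥ a = v' then ((Fintype.card R : ℂ) ^ n) else 0 := by
          intro U
          rw [sum_char_dotL χ hχ]
          by_cases h : U.val.val *ᵥ a = v'
          · rw [if_pos (sub_eq_zero.mpr h), if_pos h]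
          · rw [if_neg (fun hc => h (sub_eq_zero.mp hc)), if_neg h]
        rw [Finset.sum_congr rfl fun U _ => step U, ← Finset.sum_filter, Finset.sum_const,
          nsmul_eq_mul, mul_comm]
      have h1 : (∑ U : 𝒰, ∑ u : Fin n → R, χ (u ⬝ᵥ (U.val.val *ᵥ v - v'))) ≠ 0 := by
        rw [hΦ, eval v']
        refine mul_ne_zero hcard ?_
        rw [Nat.cast_ne_zero, ← Nat.pos_iff_ne_zero, Finset.card_pos]
        refine ⟨1, Finset.mem_filter.mpr ⟨Finset.mem_univ _, ?_⟩⟩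
        show (1 : 𝒰).val.val *ᵥ v' = v'
        rw [OneMemClass.coe_one, Units.val_one, Matrix.one_mulVec]
      rw [eval v] at h1
      have h2 : (Finset.univ.filter fun U : 𝒰 => U.val.val *ᵥ v = v').Nonempty := by
        rw [← Finset.card_pos, Nat.pos_iff_ne_zero]
        intro h0
        rw [h0] at h1
        simp at h1
      obtain ⟨U, hU⟩ := h2
      rw [Finset.mem_filter] at hU
      exact ⟨U.val, U.2, hU.2.symm⟩
  · intro v v'
    constructor
    · -- forward
      rintro ⟨W, hW, rfl⟩ u
      unfold sumR
      refine Finset.sum_nbij' (fun w => (W⁻¹).val *ᵥ w) (fun w => W.val *ᵥ w) ?_ ?_ ?_ ?_ ?_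
      · intro w hw
        rw [Set.Finite.mem_toFinset] at hw ⊢
        obtain ⟨V, hV, rfl⟩ := hw
        refine ⟨W⁻¹ * V, mul_mem (inv_mem hW) hV, ?_⟩
        show (W⁻¹).val *ᵥ (V.val *ᵥ u) = (W⁻¹ * V).val *ᵥ u
        rw [Units.val_mul, Matrix.mulVec_mulVec]
      · intro w hw
        rw [Set.Finite.mem_toFinset] at hw ⊢
        obtain ⟨V, hV, rfl⟩ := hw
        refine ⟨W * V, mul_mem hW hV, ?_⟩
        show W.val *ᵥ (V.val *ᵥ u) = (W * V).val *ᵥ u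
        rw [Units.val_mul, Matrix.mulVec_mulVec]
      · intro w _
        show W.val *ᵥ ((W⁻¹).val *ᵥ w) = w
        rw [Matrix.mulVec_mulVec, ← Units.val_mul, mul_inv_cancel, Units.val_one,
          Matrix.one_mulVec]
      · intro w _
        show (W⁻¹).val *ᵥ (W.val *ᵥ w) = w
        rw [Matrix.mulVec_mulVec, ← Units.val_mul, inv_mul_cancel, Units.val_one,
          Matrix.one_mulVec]
      · intro w _
        show χ (v ⬝ᵥ w) = χ ((v ᵥ* W.val) ⬝ᵥ ((W⁻¹).val *ᵥ w))
        rw [← Matrix.dotProduct_mulVec, Matrix.mulVec_mulVec, ← Units.val_mul, mul_inv_cancel,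
          Units.val_one, Matrix.one_mulVec]
    · -- converse
      intro H
      have key : ∀ a : Fin n → R,
          (∑ U : 𝒰, ∑ u : Fin n → R, χ ((a ᵥ* (U⁻¹).val.val - v') ⬝ᵥ u))
            = ∑ u : Fin n → R, χ ((-v') ⬝ᵥ u)
                * (((Finset.univ.filter fun U : 𝒰 => (U⁻¹).val.val *ᵥ u = u).card : ℂ)
                    * sumR χ (leftOrbit 𝒰 u) a) := by
        intro a
        rw [Finset.sum_comm]
        refine Finset.sum_congr rfl fun u _ => ?_
        calc ∑ U : 𝒰, χ ((a ᵥ* (U⁻¹).val.val - v') ⬝ᵥ u)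
            = ∑ U : 𝒰, χ ((-v') ⬝ᵥ u) * χ (a ⬝ᵥ ((U⁻¹).val.val *ᵥ u)) := by
              refine Finset.sum_congr rfl fun U _ => ?_
              rw [sub_eq_add_neg, add_dotProduct, AddChar.map_add_eq_mul, mul_comm,
                Matrix.dotProduct_mulVec]
          _ = χ ((-v') ⬝ᵥ u) * ∑ U : 𝒰, χ (a ⬝ᵥ ((U⁻¹).val.val *ᵥ u)) := by
              rw [Finset.mul_sum]
          _ = _ := by rw [sum_group_leftOrbit 𝒰 χ u a]
      have hΦ : (∑ U : 𝒰, ∑ u : Fin n → R, χ ((v ᵥ* (U⁻¹).val.val - v') ⬝ᵥ u))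
          = ∑ U : 𝒰, ∑ u : Fin n → R, χ ((v' ᵥ* (U⁻¹).val.val - v') ⬝ᵥ u) := by
        rw [key v, key v']
        exact Finset.sum_congr rfl fun u _ => by rw [H u]
      have eval : ∀ a : Fin n → R,
          (∑ U : 𝒰, ∑ u : Fin n → R, χ ((a ᵥ* (U⁻¹).val.val - v') ⬝ᵥ u))
            = ((Fintype.card R : ℂ) ^ n)
              * ((Finset.univ.filter fun U : 𝒰 => a ᵥ* (U⁻¹).val.val = v').card : ℂ) := by
        intro a
        have step : ∀ U : 𝒰, (∑ u : Fin n → R, χ ((a ᵥ* (U⁻¹).val.val - v') ⬝ᵥ u))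
            = if a ᵥ* (U⁻¹).val.val = v' then ((Fintype.card R : ℂ) ^ n) else 0 := by
          intro U
          rw [sum_char_dotR χ hχ]
          by_cases h : a ᵥ* (U⁻¹).val.val = v'
          · rw [if_pos (sub_eq_zero.mpr h), if_pos h]
          · rw [if_neg (fun hc => h (sub_eq_zero.mp hc)), if_neg h]
        rw [Finset.sum_congr rfl fun U _ => step U, ← Finset.sum_filter, Finset.sum_const,
          nsmul_eq_mul, mul_comm]
      have h1 : (∑ U : 𝒰, ∑ u : Fin n → R, χ ((v ᵥ* (U⁻¹).val.val - v') ⬝ᵥ u)) ≠ 0 := by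
        rw [hΦ, eval v']
        refine mul_ne_zero hcard ?_
        rw [Nat.cast_ne_zero, ← Nat.pos_iff_ne_zero, Finset.card_pos]
        refine ⟨1, Finset.mem_filter.mpr ⟨Finset.mem_univ _, ?_⟩⟩
        show v' ᵥ* ((1 : 𝒰)⁻¹).val.val = v'
        rw [inv_one, OneMemClass.coe_one, Units.val_one, Matrix.vecMul_one]
      rw [eval v] at h1
      have h2 : (Finset.univ.filter fun U : 𝒰 => v ᵥ* (U⁻¹).val.val = v').Nonempty := by
        rw [← Finset.card_pos, Nat.pos_iff_ne_zero]
        intro h0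
        rw [h0] at h1
        simp at h1
      obtain ⟨U, hU⟩ := h2
      rw [Finset.mem_filter] at hU
      exact ⟨(U⁻¹).val, (U⁻¹).2, hU.2.symm⟩
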